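/- Let (R,d) be a differential graded ring and S a multiplicatively closed subset of ker(d) satisfying the right Ore condition in R. Then ass(S) = {r ∈ R : ∃ s ∈ S, rs = 0} is a two-sided ideal of R that is closed under the differential d (i.e., a dg-ideal). -/

import Mathlib

/-- A differential making a `ℤ`-graded ring into a differential graded ring:
an additive endomorphism of degree `1`, of square zero, satisfying the
(signed) Leibniz rule on homogeneous elements. -/
structure DGDifferential {R : Type*} [Ring R] (𝒜 : ℤ → AddSubgroup R) [GradedRing 𝒜] where
  d : R →+ R
  d_mem : ∀ (i : ℤ) (x : R), x ∈ 𝒜 i → d x ∈ 𝒜 (i + 1)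
  d_sq : ∀ x : R, d (d x) = 0
  leibniz : ∀ (i : ℤ) (a b : R), a ∈ 𝒜 i →
    d (a * b) = d a * b + ((-1 : ℤ) ^ i.natAbs) • (a * d b)

lemma d_mul_ker {R : Type*} [Ring R] (𝒜 : ℤ → AddSubgroup R) [GradedRing 𝒜]
    (D : DGDifferential 𝒜) {s : R} (hs : D.d s = 0) (r : R) :
    D.d (r * s) = D.d r * s := by
  induction r using DirectSum.Decomposition.inductionOn 𝒜 with
  | zero => simp
  | @homogeneous i a =>
    obtain ⟨a, ha⟩ := a
    rw [D.leibniz i a s ha, hs, mul_zero, smul_zero, add_zero]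
  | add x y hx hy =>
    rw [add_mul, map_add, hx, hy, map_add, add_mul]

/-- if `S ⊆ ker d` is multiplicatively closed and satisfies the right
Ore condition in `R`, then `ass S = {r | ∃ s ∈ S, r * s = 0}` is a two-sided ideal
of `R` closed under the differential `d`. -/
theorem ass_is_dg_ideal {R : Type*} [Ring R] (𝒜 : ℤ → AddSubgroup R) [GradedRing 𝒜]
    (D : DGDifferential 𝒜) (S : Set R)
    (hS_ne : S.Nonempty)
    (hS_ker : ∀ s ∈ S, D.d s = 0)
    (hS_mul : ∀ s ∈ S, ∀ t ∈ S, s * t ∈ S)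
    (hOre : ∀ (r : R), ∀ s ∈ S, ∃ r' : R, ∃ s' ∈ S, r * s' = s * r') :
    ∃ I : TwoSidedIdeal R,
      (∀ r : R, r ∈ I ↔ ∃ s ∈ S, r * s = 0) ∧ (∀ x ∈ I, D.d x ∈ I) := by
  obtain ⟨s₀, hs₀⟩ := hS_ne
  refine ⟨TwoSidedIdeal.mk' {r | ∃ s ∈ S, r * s = 0}
    ⟨s₀, hs₀, zero_mul s₀⟩
    (fun {x y} ⟨s, hs, hxs⟩ ⟨t, ht, hyt⟩ => ?_)
    (fun {x} ⟨s, hs, hxs⟩ => ⟨s, hs, by rw [neg_mul, hxs, neg_zero]⟩)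
    (fun {x y} ⟨s, hs, hys⟩ => ⟨s, hs, by rw [mul_assoc, hys, mul_zero]⟩)
    (fun {x y} ⟨s, hs, hxs⟩ => ?_), fun r => TwoSidedIdeal.mem_mk' _ _ _ _ _ _ r, ?_⟩
  · -- add
    obtain ⟨r', s', hs', hc⟩ := hOre t s hs
    refine ⟨t * s', hS_mul t ht s' hs', ?_⟩
    rw [add_mul, ← mul_assoc y t s', hyt, zero_mul, add_zero, hc,
      ← mul_assoc, hxs, zero_mul]
  · -- mul right
    obtain ⟨r', s', hs', hc⟩ := hOre y s hs
    exact ⟨s', hs', by rw [mul_assoc, hc, ← mul_assoc, hxs, zero_mul]⟩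
  · rintro x hx
    rw [TwoSidedIdeal.mem_mk'] at hx ⊢
    obtain ⟨s, hs, hxs⟩ := hx
    exact ⟨s, hs, by rw [← d_mul_ker 𝒜 D (hS_ker s hs), hxs, map_zero]⟩
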